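/- Let B be a conjunction of literals with domain all of C (|B| = |C|), and suppose that all, or all but one, of the literals of B have a positive monotonic effect on D relative to C. Then B is singular for D(C,Ω) if and only if B is irreducible for D(C,Ω). -/

import Mathlib

/-- An assignment of values to the binary causes indexed by `ι`. -/
abbrev Assign (ι : Type*) := ι → Bool

/-- A conjunction of literals over `ι`: a partial assignment, where `B i = some v`
means the literal at coordinate `i` has target value `v`, and `B i = none` means
`i` is not in the domain of the conjunction. -/
abbrev Conj (ι : Type*) := ι → Option Bool

/-- An assignment `c` satisfies a conjunction of literals `B`. -/
def Satisfies {ι : Type*} (c : Assign ι) (B : Conj ι) : Prop :=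
  ∀ i v, B i = some v → c i = v

/-- `B'` extends `B` : the domain of `B'` contains that of `B` and they agree there. -/
def ConjExtends {ι : Type*} (B B' : Conj ι) : Prop :=
  ∀ i v, B i = some v → B' i = some v

/-- `(A, 𝔅)` is a sufficient cause representation for the family of potential
outcomes `D`. -/
def IsRepresentation {ι Ω : Type*} (D : Ω → Assign ι → Bool)
    {p : ℕ} (A : Fin p → Ω → Bool) (𝔅 : Fin p → Conj ι) : Prop :=
  ∀ (ω : Ω) (c : Assign ι),
    D ω c = true ↔ ∃ j, A j ω = true ∧ Satisfies c (𝔅 j)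

/-- `B` is irreducible for `D(C, Ω)`: every sufficient cause representation
contains some conjunction extending `B`. -/
def IrreducibleConj {ι Ω : Type*} (D : Ω → Assign ι → Bool) (B : Conj ι) : Prop :=
  ∀ (p : ℕ) (A : Fin p → Ω → Bool) (𝔅 : Fin p → Conj ι),
    IsRepresentation D A 𝔅 → ∃ j, ConjExtends B (𝔅 j)

/-- `B` is a sufficient cause for `D` for the individual `ω`. -/
def SuffCauseFor {ι Ω : Type*} (D : Ω → Assign ι → Bool) (B : Conj ι) (ω : Ω) : Prop :=
  ∀ c : Assign ι, Satisfies c B → D ω c = true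

/-- `B` is a minimal sufficient cause for `D` for `ω`: it is a sufficient cause,
but no restriction of `B` to a proper subset of its domain is. -/
def MinSuffCauseFor {ι Ω : Type*} (D : Ω → Assign ι → Bool) (B : Conj ι) (ω : Ω) : Prop :=
  SuffCauseFor D B ω ∧
    ∀ B' : Conj ι, ConjExtends B' B → B' ≠ B → ¬ SuffCauseFor D B' ω

/-- `B` is a singular (minimal sufficient) cause for `ω`: it is the unique minimal
sufficient cause for `ω`. -/
def SingularFor {ι Ω : Type*} (D : Ω → Assign ι → Bool) (B : Conj ι) (ω : Ω) : Prop :=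
  MinSuffCauseFor D B ω ∧ ∀ B' : Conj ι, B' ≠ B → ¬ MinSuffCauseFor D B' ω

/-- `B` is singular for `D(C, Ω)`: it is singular for some individual. -/
def Singular {ι Ω : Type*} (D : Ω → Assign ι → Bool) (B : Conj ι) : Prop :=
  ∃ ω : Ω, SingularFor D B ω

/-- The literal at coordinate `i` with target value `v` has a positive monotonic
effect on `D` relative to `C`. -/
def PosMonotone {ι Ω : Type*} [DecidableEq ι] (D : Ω → Assign ι → Bool)
    (i : ι) (v : Bool) : Prop :=
  ∀ (ω : Ω) (c : Assign ι),
    D ω (Function.update c i (!v)) = true → D ω (Function.update c i v) = true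

/-- `T` is a tree on the finite vertex set `V`: a set of unordered pairs of
distinct elements of `V` with `|T| = |V| - 1` such that any two vertices of `V`
are connected by a path of edges of `T`. -/
def IsTreeOn {ι : Type*} (V : Finset ι) (T : Finset (Sym2 ι)) : Prop :=
  (∀ e ∈ T, ¬ e.IsDiag ∧ ∀ i ∈ e, i ∈ V) ∧
  T.card = V.card - 1 ∧
  (∀ x ∈ V, ∀ y ∈ V, Relation.ReflTransGen (fun a b => s(a, b) ∈ T) x y)


set_option linter.unusedSectionVars false

section AuxSingular
variable {ι Ω : Type*} [Fintype ι] [DecidableEq ι]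

lemma aux_eq_or_eq_update {c a : Assign ι} (i : ι) (h : ∀ k, k ≠ i → c k = a k) :
    c = a ∨ c = Function.update a i (!(a i)) := by
  by_cases hi : c i = a i
  · left; funext k
    by_cases hk : k = i
    · subst hk; exact hi
    · exact h k hk
  · right; funext k
    by_cases hk : k = i
    · subst hk
      rw [Function.update_self]
      cases hc : c k <;> cases ha : a k <;> simp_all
    · rw [Function.update_of_ne hk]; exact h k hk

lemma aux_satisfies_full_iff (b : ι → Bool) (c : Assign ι) :
    Satisfies c (fun i => some (b i)) ↔ c = b := by
  constructor
  · intro h; funext i; exact h i (b i) rfl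
  · rintro rfl i v hv; exact Option.some.inj hv

lemma aux_raise (D : Ω → Assign ι → Bool) (b : ι → Bool) (j : ι)
    (hmono : ∀ i : ι, i ≠ j → PosMonotone D i (b i)) (ω : Ω) :
    ∀ s : Finset ι, j ∉ s → ∀ c : Assign ι, D ω c = true →
      D ω (fun k => if k ∈ s then b k else c k) = true := by
  intro s
  induction s using Finset.induction_on with
  | empty => intro _ c h; simpa using h
  | @insert i s hi ih =>
    intro hj c hc
    have hji : j ∉ s := fun h => hj (Finset.mem_insert_of_mem h)
    have hij : i ≠ j := fun h => hj (h ▸ Finset.mem_insert_self i s)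
    have h1 : D ω (fun k => if k ∈ s then b k else c k) = true := ih hji c hc
    set c1 : Assign ι := fun k => if k ∈ s then b k else c k with hc1
    have key : (fun k => if k ∈ insert i s then b k else c k)
        = Function.update c1 i (b i) := by
      funext k
      by_cases hk : k = i
      · subst hk; simp [hc1, Function.update_self]
      · rw [Function.update_of_ne hk]
        simp [hc1, Finset.mem_insert, hk]
    rw [key]
    have hc1i : c1 i = c i := by simp [hc1, hi]
    by_cases hci : c i = b i
    · have : Function.update c1 i (b i) = c1 := by
        rw [← hci, ← hc1i, Function.update_eq_self]
      rw [this]; exact h1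
    · have hci' : c i = !(b i) := by cases h : c i <;> cases h' : b i <;> simp_all
      have : Function.update c1 i (!(b i)) = c1 := by
        rw [← hci', ← hc1i, Function.update_eq_self]
      exact hmono i hij ω c1 (by rw [this]; exact h1)

/-- MinSuffCauseFor for the full conjunction is equivalent to the pointwise property. -/
lemma aux_minsuff_iff (D : Ω → Assign ι → Bool) (b : ι → Bool) (ω : Ω) :
    MinSuffCauseFor D (fun i => some (b i)) ω ↔
      (D ω b = true ∧ ∀ i, D ω (Function.update b i (!(b i))) = false) := by
  constructor
  · rintro ⟨hsuff, hmin⟩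
    have hDb : D ω b = true := hsuff b ((aux_satisfies_full_iff b b).mpr rfl)
    refine ⟨hDb, fun i => ?_⟩
    set B' : Conj ι := fun k => if k = i then none else some (b k) with hB'
    have hext : ConjExtends B' (fun i => some (b i)) := by
      intro k v hv
      simp only [hB'] at hv
      by_cases hk : k = i
      · simp [hk] at hv
      · simp [hk] at hv; simp [hv]
    have hne : B' ≠ (fun i => some (b i)) := by
      intro h
      have := congrFun h i
      simp [hB'] at this
    have hnsuff := hmin B' hext hne
    rw [SuffCauseFor] at hnsuff
    push_neg at hnsuff
    obtain ⟨c, hcs, hcD⟩ := hnsuff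
    have hagree : ∀ k, k ≠ i → c k = b k := by
      intro k hk
      exact hcs k (b k) (by simp [hB', hk])
    rcases aux_eq_or_eq_update i hagree with rfl | rfl
    · exact absurd hDb hcD
    · simpa using hcD
  · rintro ⟨hDb, hflip⟩
    constructor
    · intro c hc
      rw [aux_satisfies_full_iff] at hc
      subst hc; exact hDb
    · intro B' hext hne hsuff
      have hvals : ∀ k v, B' k = some v → v = b k := by
        intro k v hv
        have := hext k v hv
        exact (Option.some.inj this).symm
      have : ∃ i, B' i = none := by
        by_contra h
        push_neg at h
        apply hne
        funext k
        rcases hk : B' k with _ | v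
        · exact absurd hk (h k)
        · rw [hvals k v hk]
      obtain ⟨i, hi⟩ := this
      have hsat : Satisfies (Function.update b i (!(b i))) B' := by
        intro k v hv
        have hki : k ≠ i := by rintro rfl; rw [hi] at hv; exact nomatch hv
        rw [Function.update_of_ne hki, hvals k v hv]
      have := hsuff _ hsat
      rw [hflip i] at this
      exact Bool.noConfusion this

/-- The key property implies singularity, using monotonicity. -/
lemma aux_P_singular (D : Ω → Assign ι → Bool) (b : ι → Bool) (j : ι)
    (hmono : ∀ i : ι, i ≠ j → PosMonotone D i (b i)) (ω : Ω)
    (hDb : D ω b = true) (hflip : ∀ i, D ω (Function.update b i (!(b i))) = false) :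
    SingularFor D (fun i => some (b i)) ω := by
  have hmins := (aux_minsuff_iff D b ω).mpr ⟨hDb, hflip⟩
  refine ⟨hmins, fun B' hne hmin' => ?_⟩
  have hsuff' := hmin'.1
  set c0 : Assign ι := fun k => (B' k).getD (b k) with hc0
  have hsat0 : Satisfies c0 B' := by
    intro k v hv; simp [hc0, hv]
  have hD0 : D ω c0 = true := hsuff' c0 hsat0
  -- Show c0 = b
  have hc0b : c0 = b := by
    by_contra h
    have : ∃ k, c0 k ≠ b k := Function.ne_iff.mp h
    -- choose exceptional coordinate i
    obtain ⟨i, hiF, hjs⟩ :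
        ∃ i, c0 i ≠ b i ∧ j ∉ (Finset.univ.filter (fun k => c0 k ≠ b k)).erase i := by
      by_cases hjF : c0 j = b j
      · obtain ⟨k, hk⟩ := this
        refine ⟨k, hk, fun hmem => ?_⟩
        rw [Finset.mem_erase, Finset.mem_filter] at hmem
        exact hmem.2.2 hjF
      · exact ⟨j, hjF, fun hmem => (Finset.mem_erase.mp hmem).1 rfl⟩
    set s : Finset ι := (Finset.univ.filter (fun k => c0 k ≠ b k)).erase i with hs
    have hD2 := aux_raise D b j hmono ω s hjs c0 hD0
    have hkey : (fun k => if k ∈ s then b k else c0 k) = Function.update b i (!(b i)) := by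
      funext k
      by_cases hk : k = i
      · subst hk
        have : k ∉ s := by simp [hs]
        rw [if_neg this, Function.update_self]
        cases h1 : c0 k <;> cases h2 : b k <;> simp_all
      · rw [Function.update_of_ne hk]
        by_cases hks : k ∈ s
        · rw [if_pos hks]
        · rw [if_neg hks]
          by_contra hne'
          exact hks (by rw [hs]; exact Finset.mem_erase.mpr ⟨hk, Finset.mem_filter.mpr ⟨Finset.mem_univ k, hne'⟩⟩)
    rw [hkey, hflip i] at hD2
    exact Bool.noConfusion hD2
  have hext : ConjExtends B' (fun i => some (b i)) := by
    intro k v hv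
    have := hsat0 k v hv
    rw [congrFun hc0b k] at this
    rw [← this]
  exact hmins.2 B' hext hne hsuff'

/-- The key property implies irreducibility. -/
lemma aux_P_irred (D : Ω → Assign ι → Bool) (b : ι → Bool) (ω : Ω)
    (hDb : D ω b = true) (hflip : ∀ i, D ω (Function.update b i (!(b i))) = false) :
    IrreducibleConj D (fun i => some (b i)) := by
  intro p A 𝔅 hrep
  obtain ⟨j, hA, hsat⟩ := (hrep ω b).mp hDb
  refine ⟨j, fun i v hv => ?_⟩
  have hv' : v = b i := (Option.some.inj hv).symm
  subst hv'
  rcases hB : 𝔅 j i with _ | w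
  · exfalso
    have hsatc : Satisfies (Function.update b i (!(b i))) (𝔅 j) := by
      intro k w hw
      have hki : k ≠ i := by rintro rfl; rw [hB] at hw; exact nomatch hw
      rw [Function.update_of_ne hki]
      exact hsat k w hw
    have := (hrep ω _).mpr ⟨j, hA, hsatc⟩
    rw [hflip i] at this
    exact Bool.noConfusion this
  · have := hsat i w hB
    exact congrArg some this.symm

/-- Irreducibility implies the key property holds for some ω. -/
lemma aux_irred_P (D : Ω → Assign ι → Bool) (b : ι → Bool)
    (hirr : IrreducibleConj D (fun i => some (b i))) :
    ∃ ω, D ω b = true ∧ ∀ i, D ω (Function.update b i (!(b i))) = false := by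
  by_contra hP
  push_neg at hP
  -- build a representation avoiding the full conjunction b
  set J := (ι × Assign ι) ⊕ {a : Assign ι // a ≠ b} with hJ
  set e : Fin (Fintype.card J) ≃ J := (Fintype.equivFin J).symm with he
  set A : Fin (Fintype.card J) → Ω → Bool := fun n ω =>
    Sum.elim
      (fun q : ι × Assign ι => D ω q.2 && D ω (Function.update q.2 q.1 (!(q.2 q.1))))
      (fun a : {a : Assign ι // a ≠ b} =>
        D ω a.1 && decide (∀ i, D ω (Function.update a.1 i (!(a.1 i))) = false))
      (e n) with hA
  set 𝔅 : Fin (Fintype.card J) → Conj ι := fun n =>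
    Sum.elim
      (fun q : ι × Assign ι => fun k => if k = q.1 then none else some (q.2 k))
      (fun a : {a : Assign ι // a ≠ b} => fun k => some (a.1 k))
      (e n) with h𝔅
  have hrep : IsRepresentation D A 𝔅 := by
    intro ω c
    constructor
    · intro hD
      by_cases hex : ∃ i, D ω (Function.update c i (!(c i))) = true
      · obtain ⟨i, hi⟩ := hex
        refine ⟨e.symm (Sum.inl (i, c)), ?_, ?_⟩
        · simp only [hA, Equiv.apply_symm_apply, Sum.elim_inl]
          rw [hD, hi]; rfl
        · simp only [h𝔅, Equiv.apply_symm_apply, Sum.elim_inl]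
          intro k v hv
          by_cases hk : k = i
          · simp [hk] at hv
          · simp [hk] at hv; rw [hv]
      · push_neg at hex
        have hiso : ∀ i, D ω (Function.update c i (!(c i))) = false := by
          intro i
          cases h : D ω (Function.update c i (!(c i)))
          · rfl
          · exact absurd h (hex i)
        have hcb : c ≠ b := by
          rintro rfl
          obtain ⟨i, hi⟩ := hP ω hD
          exact hi (hiso i)
        refine ⟨e.symm (Sum.inr ⟨c, hcb⟩), ?_, ?_⟩
        · simp only [hA, Equiv.apply_symm_apply, Sum.elim_inr]
          rw [hD]
          simp [hiso]
        · simp only [h𝔅, Equiv.apply_symm_apply, Sum.elim_inr]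
          intro k v hv
          exact Option.some.inj hv
    · rintro ⟨n, hAn, hsat⟩
      rcases hen : e n with q | a
      · simp only [hA, hen, Sum.elim_inl, Bool.and_eq_true] at hAn
        simp only [h𝔅, hen, Sum.elim_inl] at hsat
        have hagree : ∀ k, k ≠ q.1 → c k = q.2 k := by
          intro k hk
          exact hsat k (q.2 k) (by simp [hk])
        rcases aux_eq_or_eq_update q.1 hagree with rfl | hcu
        · exact hAn.1
        · rw [hcu]; exact hAn.2
      · simp only [hA, hen, Sum.elim_inr, Bool.and_eq_true] at hAn
        simp only [h𝔅, hen, Sum.elim_inr] at hsat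
        have : c = a.1 := by
          funext k; exact hsat k (a.1 k) rfl
        rw [this]; exact hAn.1
  obtain ⟨n, hext⟩ := hirr _ A 𝔅 hrep
  rcases hen : e n with q | a
  · have := hext q.1 (b q.1) rfl
    simp only [h𝔅, hen, Sum.elim_inl] at this
    simp at this
  · have : a.1 = b := by
      funext k
      have := hext k (b k) rfl
      simp only [h𝔅, hen, Sum.elim_inr] at this
      exact Option.some.inj this
    exact a.2 this

end AuxSingular

/-- Corollary 5.4: if all, or all but one, of the literals of a
full-domain conjunction have positive monotonic effects, then singularity and
irreducibility coincide. -/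
theorem singular_iff_irreducible_of_monotone {ι Ω : Type*} [Fintype ι] [DecidableEq ι]
    [Nonempty ι] [Nonempty Ω]
    (D : Ω → Assign ι → Bool) (b : ι → Bool)
    (hmono : ∃ j : ι, ∀ i : ι, i ≠ j → PosMonotone D i (b i)) :
    Singular D (fun i => some (b i)) ↔ IrreducibleConj D (fun i => some (b i)) := by
  obtain ⟨j, hmono⟩ := hmono
  constructor
  · rintro ⟨ω, hsing⟩
    have hP := (aux_minsuff_iff D b ω).mp hsing.1
    exact aux_P_irred D b ω hP.1 hP.2
  · intro hirr
    obtain ⟨ω, hDb, hflip⟩ := aux_irred_P D b hirr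
    exact ⟨ω, aux_P_singular D b j hmono ω hDb hflip⟩
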